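/- arXiv:2009.10883 — 2 statements merged into one kernel-verified Lean document; each statement's English description precedes it below -/
import Mathlib

section
/- (Lemma 1) Let M be a labeled MDP, let Paths_fin,φ ⊆ Paths_fin(s_init) be a set of finite paths of interest of M, let M' be the augmented MDP of M, and let Π' be the set of policies of M' that enforce a visit to state s_term (i.e., eventually take action a_term). Then max_{π ∈ Π} Pr(M^π ⊨ Paths_fin,φ) = max_{π' ∈ Π'} Pr(M'^{π'} ⊨ Paths_fin,φ). -/
open scoped ENNReal

namespace LTLfMDP

/-- A labeled Markov decision process (data part): transition probabilities,
enabled actions, initial state and labeling function. -/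
structure MDP (S A AP : Type) where
  P : S → A → S → ℝ≥0∞
  enabled : S → Set A
  init : S
  label : S → Set AP

/-- A finite path from the initial state: the list of action/successor-state
steps taken (the implicit first state is `init`). -/
abbrev FinPath (S A : Type) := List (A × S)

/-- An infinite path from the initial state: at time `i` the action taken and
the successor state reached (the implicit first state is `init`). -/
abbrev InfPath (S A : Type) := ℕ → A × S

/-- A policy maps every finite path to an action. -/
abbrev Policy (S A : Type) := FinPath S A → A

variable {S A AP : Type}

/-- Well-formedness of a labeled MDP: every state has an enabled action and
the transition probabilities of enabled actions sum to one. -/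
def MDP.IsWF [Fintype S] (M : MDP S A AP) : Prop :=
  (∀ s : S, (M.enabled s).Nonempty) ∧
    ∀ (s : S) (a : A), a ∈ M.enabled s → (∑ s' : S, M.P s a s') = 1

/-- The last state of a finite path (`init` for the empty path). -/
def MDP.lastState (M : MDP S A AP) (l : FinPath S A) : S :=
  (l.map Prod.snd).getLastD M.init

/-- The `i`-th state `s_i` along a finite path (`s_0 = init`). -/
def MDP.stateAtF (M : MDP S A AP) (l : FinPath S A) (i : ℕ) : S :=
  M.lastState (l.take i)

/-- A finite path of the MDP: every action is enabled and every transition has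
positive probability. -/
def MDP.ValidFin (M : MDP S A AP) (l : FinPath S A) : Prop :=
  ∀ i (h : i < l.length),
    (l.get ⟨i, h⟩).1 ∈ M.enabled (M.stateAtF l i) ∧
      0 < M.P (M.stateAtF l i) (l.get ⟨i, h⟩).1 (l.get ⟨i, h⟩).2

/-- The `i`-th state `s_i` along an infinite path (`s_0 = init`). -/
def MDP.stateAtI (M : MDP S A AP) (w : InfPath S A) : ℕ → S
  | 0 => M.init
  | i + 1 => (w i).2

/-- An infinite path of the MDP: every action is enabled and every transition
has positive probability. -/
def MDP.ValidInf (M : MDP S A AP) (w : InfPath S A) : Prop :=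
  ∀ i : ℕ,
    (w i).1 ∈ M.enabled (M.stateAtI w i) ∧
      0 < M.P (M.stateAtI w i) (w i).1 (M.stateAtI w (i + 1))

/-- A policy of the MDP chooses an enabled action after every finite path. -/
def MDP.IsPolicy (M : MDP S A AP) (π : Policy S A) : Prop :=
  ∀ l : FinPath S A, π l ∈ M.enabled (M.lastState l)

/-- The finite prefix of length `n` of an infinite path. -/
def takeI (w : InfPath S A) (n : ℕ) : FinPath S A :=
  (List.range n).map w

/-- A finite path is `π`-consistent if each of its actions is the one `π`
assigns to the corresponding proper prefix. -/
def ConsistentFin (π : Policy S A) (l : FinPath S A) : Prop :=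
  ∀ i (h : i < l.length), (l.get ⟨i, h⟩).1 = π (l.take i)

/-- `Paths^π(s_init)`: the set of `π`-consistent infinite paths of the MDP. -/
def MDP.PathsSet (M : MDP S A AP) (π : Policy S A) : Set (InfPath S A) :=
  { w | M.ValidInf w ∧ ∀ i : ℕ, (w i).1 = π (takeI w i) }

/-- The cylinder set of a finite path: all `π`-consistent infinite paths of the
MDP extending it. -/
def MDP.Cyl (M : MDP S A AP) (π : Policy S A) (l : FinPath S A) :
    Set (InfPath S A) :=
  { w | w ∈ M.PathsSet π ∧ takeI w l.length = l }

/-- The σ-algebra generated by the cylinder sets of (valid, `π`-consistent)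
finite paths. -/
def MDP.cylSigma (M : MDP S A AP) (π : Policy S A) :
    MeasurableSpace (InfPath S A) :=
  MeasurableSpace.generateFrom
    { C | ∃ l : FinPath S A, M.ValidFin l ∧ ConsistentFin π l ∧ C = M.Cyl π l }

/-- The product of the transition probabilities along a finite path starting
in a given state. -/
noncomputable def MDP.weightFrom (M : MDP S A AP) : S → List (A × S) → ℝ≥0∞
  | _, [] => 1
  | s, (a, s') :: rest => M.P s a s' * M.weightFrom s' rest

/-- `∏_{0 ≤ i < n} P(s_i, a_i, s_{i+1})` for a finite path from `init`. -/
noncomputable def MDP.pathWeight (M : MDP S A AP) (l : FinPath S A) : ℝ≥0∞ :=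
  M.weightFrom M.init l

/-- `μ` is the probability measure `Pr^π` induced by the policy `π`: it assigns
to the cylinder set of every valid `π`-consistent finite path the product of
the transition probabilities along that path. -/
def IsCylMeasure (M : MDP S A AP) (π : Policy S A)
    (μ : @MeasureTheory.Measure (InfPath S A) (M.cylSigma π)) : Prop :=
  ∀ l : FinPath S A, M.ValidFin l → ConsistentFin π l →
    μ (M.Cyl π l) = M.pathWeight l

/-- `{w ∈ Paths^π(s_init) : pre(w) ∩ Paths_fin,φ ≠ ∅}`: the `π`-consistent
infinite paths having some finite prefix in the given set of finite paths. -/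
def MDP.SatFinSet (M : MDP S A AP) (π : Policy S A)
    (Pfin : Set (FinPath S A)) : Set (InfPath S A) :=
  { w | w ∈ M.PathsSet π ∧ ∃ l ∈ Pfin, takeI w l.length = l }

/-- The augmented MDP `M'`: state `none` is `s_term`, action `none` is
`a_term`, and atomic proposition `none` is `alive`. -/
noncomputable def MDP.augment (M : MDP S A AP) : MDP (Option S) (Option A) (Option AP) where
  P s a s' :=
    match s, a, s' with
    | some s0, some a0, some s1 => M.P s0 a0 s1
    | _, none, none => 1
    | _, _, _ => 0
  enabled s :=
    match s with
    | some s0 => insert none (Option.some '' M.enabled s0)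
    | none => {none}
  init := some M.init
  label s :=
    match s with
    | some s0 => insert none (Option.some '' M.label s0)
    | none => ∅

/-- A finite path of `M` viewed as a finite path of the augmented MDP `M'`. -/
def liftFin (l : FinPath S A) : FinPath (Option S) (Option A) :=
  l.map fun p => (some p.1, some p.2)

/-- Membership in `Π'`: under `π'` every `π'`-consistent path of the augmented
MDP eventually takes the action `a_term` (= `none`). -/
def MDP.Terminating (M' : MDP (Option S) (Option A) (Option AP))
    (π' : Policy (Option S) (Option A)) : Prop :=
  ∀ w ∈ M'.PathsSet π', ∃ i : ℕ, (w i).1 = (none : Option A)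

/-! ### Auxiliary material -/

section Aux

open MeasureTheory

lemma takeI_length (w : InfPath S A) (n : ℕ) : (takeI w n).length = n := by
  simp [takeI]

lemma take_takeI (w : InfPath S A) (m n : ℕ) :
    (takeI w n).take m = takeI w (min m n) := by
  simp only [takeI]; rw [← List.map_take, List.take_range]

lemma take_takeI_of_le (w : InfPath S A) {m n : ℕ} (h : m ≤ n) :
    (takeI w n).take m = takeI w m := by
  rw [take_takeI, min_eq_left h]

lemma get_takeI (w : InfPath S A) (n i : ℕ) (h : i < (takeI w n).length) :
    (takeI w n).get ⟨i, h⟩ = w i := by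
  simp [takeI]

lemma lastState_takeI (M : MDP S A AP) (w : InfPath S A) (i : ℕ) :
    M.lastState (takeI w i) = M.stateAtI w i := by
  cases i with
  | zero => rfl
  | succ j => simp [MDP.lastState, takeI, List.range_succ, MDP.stateAtI]

lemma stateAtF_takeI (M : MDP S A AP) (w : InfPath S A) {i n : ℕ} (h : i ≤ n) :
    M.stateAtF (takeI w n) i = M.stateAtI w i := by
  rw [MDP.stateAtF, take_takeI_of_le w h, lastState_takeI]

lemma validFin_takeI {M : MDP S A AP} {w : InfPath S A} (hw : M.ValidInf w) (n : ℕ) :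
    M.ValidFin (takeI w n) := by
  intro i h
  have hi : i < n := by simpa [takeI_length] using h
  rw [get_takeI, stateAtF_takeI M w hi.le]
  exact hw i

lemma consistentFin_takeI {π : Policy S A} {w : InfPath S A}
    (hw : ∀ i : ℕ, (w i).1 = π (takeI w i)) (n : ℕ) :
    ConsistentFin π (takeI w n) := by
  intro i h
  have hi : i < n := by simpa [takeI_length] using h
  rw [get_takeI, take_takeI_of_le w hi.le]
  exact hw i

/-- The minimal elements of `Pfin` that are valid and `π`-consistent: no proper
prefix of such a path lies in `Pfin`. -/
def MinSet (M : MDP S A AP) (π : Policy S A) (Pfin : Set (FinPath S A)) :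
    Set (FinPath S A) :=
  {l | l ∈ Pfin ∧ M.ValidFin l ∧ ConsistentFin π l ∧ ∀ l' ∈ Pfin, l' <+: l → l' = l}

lemma satFinSet_eq_biUnion (M : MDP S A AP) (π : Policy S A) (Pfin : Set (FinPath S A)) :
    M.SatFinSet π Pfin = ⋃ l ∈ MinSet M π Pfin, M.Cyl π l := by
  classical
  ext w
  constructor
  · rintro ⟨hwP, l0, hl0, hl0w⟩
    have hex : ∃ n, takeI w n ∈ Pfin := ⟨l0.length, by rw [hl0w]; exact hl0⟩
    set n := Nat.find hex with hn
    have hmem : takeI w n ∈ Pfin := Nat.find_spec hex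
    have hminset : takeI w n ∈ MinSet M π Pfin := by
      refine ⟨hmem, validFin_takeI hwP.1 n, consistentFin_takeI hwP.2 n, ?_⟩
      intro l' hl' hpre
      by_contra hne
      have hlen : l'.length ≤ n := by
        simpa [takeI_length] using hpre.length_le
      have hlt : l'.length < n := by
        rcases lt_or_eq_of_le hlen with h | h
        · exact h
        · exact absurd (hpre.eq_of_length (by simp [takeI_length, h])) hne
      have hl'eq : takeI w l'.length = l' := by
        have := List.prefix_iff_eq_take.mp hpre
        rw [take_takeI_of_le w hlen] at this
        exact this.symm
      exact Nat.find_min hex hlt (by rw [hl'eq]; exact hl')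
    refine Set.mem_biUnion hminset ⟨hwP, ?_⟩
    rw [takeI_length]
  · intro hw
    rcases Set.mem_iUnion₂.mp hw with ⟨l, hl, hwl⟩
    exact ⟨hwl.1, l, hl.1, hwl.2⟩

lemma minSet_pairwiseDisjoint (M : MDP S A AP) (π : Policy S A)
    (Pfin : Set (FinPath S A)) :
    (MinSet M π Pfin).PairwiseDisjoint (M.Cyl π) := by
  intro l hl l' hl' hne
  refine Set.disjoint_left.mpr fun w hwl hwl' => hne ?_
  have key : ∀ l1 l2 : FinPath S A, l1.length ≤ l2.length →
      takeI w l1.length = l1 → takeI w l2.length = l2 → l1 <+: l2 := by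
    intro l1 l2 hlen h1 h2
    rw [List.prefix_iff_eq_take, ← h2, take_takeI_of_le w hlen, h1]
  rcases le_total l.length l'.length with h | h
  · exact hl'.2.2.2 l hl.1 (key l l' h hwl.2 hwl'.2)
  · exact (hl.2.2.2 l' hl'.1 (key l' l h hwl'.2 hwl.2)).symm

lemma measurableSet_cyl {M : MDP S A AP} {π : Policy S A} {l : FinPath S A}
    (hv : M.ValidFin l) (hc : ConsistentFin π l) :
    MeasurableSet[M.cylSigma π] (M.Cyl π l) :=
  MeasurableSpace.measurableSet_generateFrom ⟨l, hv, hc, rfl⟩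

lemma measure_satFinSet [Countable S] [Countable A] (M : MDP S A AP) (π : Policy S A)
    (Pfin : Set (FinPath S A))
    (μ : @MeasureTheory.Measure (InfPath S A) (M.cylSigma π))
    (hμ : IsCylMeasure M π μ) :
    μ (M.SatFinSet π Pfin)
      = ∑' l : FinPath S A, (MinSet M π Pfin).indicator M.pathWeight l := by
  letI := M.cylSigma π
  rw [satFinSet_eq_biUnion,
    measure_biUnion (Set.to_countable _) (minSet_pairwiseDisjoint M π Pfin)
      (fun l hl => measurableSet_cyl hl.2.1 hl.2.2.1), ← tsum_subtype]
  exact tsum_congr fun ⟨l, hl⟩ => hμ l hl.2.1 hl.2.2.1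

/-! #### lifting lemmas -/

lemma liftFin_length (l : FinPath S A) : (liftFin l).length = l.length := by
  simp [liftFin]

lemma liftFin_injective : Function.Injective (liftFin (S := S) (A := A)) := by
  have hinj : Function.Injective
      (fun p : A × S => ((some p.1 : Option A), (some p.2 : Option S))) := by
    intro p q h
    simpa [Prod.ext_iff] using h
  exact List.map_injective_iff.mpr hinj

lemma liftFin_take (l : FinPath S A) (i : ℕ) :
    (liftFin l).take i = liftFin (l.take i) :=
  List.map_take.symm

lemma liftFin_prefix_iff {l₁ l₂ : FinPath S A} :
    liftFin l₁ <+: liftFin l₂ ↔ l₁ <+: l₂ := by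
  constructor
  · intro h
    rw [List.prefix_iff_eq_take] at h ⊢
    rw [liftFin_length, liftFin_take] at h
    exact liftFin_injective h
  · intro h
    rw [List.prefix_iff_eq_take] at h ⊢
    rw [liftFin_length, liftFin_take, ← h]

lemma getLastD_map_some (xs : List S) (d : S) :
    (xs.map some).getLastD (some d) = some (xs.getLastD d) := by
  induction xs generalizing d with
  | nil => rfl
  | cons x xs ih =>
    rw [List.map_cons, List.getLastD_cons, List.getLastD_cons]
    exact ih x

lemma lastState_liftFin (M : MDP S A AP) (l : FinPath S A) :
    (M.augment).lastState (liftFin l) = some (M.lastState l) := by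
  have h1 : (liftFin l).map Prod.snd = (l.map Prod.snd).map some := by
    simp [liftFin]
  have h2 : (M.augment).init = some M.init := rfl
  rw [MDP.lastState, MDP.lastState, h1, h2, getLastD_map_some]

lemma stateAtF_liftFin (M : MDP S A AP) (l : FinPath S A) (i : ℕ) :
    (M.augment).stateAtF (liftFin l) i = some (M.stateAtF l i) := by
  rw [MDP.stateAtF, MDP.stateAtF, liftFin_take, lastState_liftFin]

lemma weightFrom_liftFin (M : MDP S A AP) :
    ∀ (l : List (A × S)) (s : S),
      (M.augment).weightFrom (some s) (liftFin l) = M.weightFrom s l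
  | [], _ => rfl
  | (a, s') :: rest, s => by
    have h : (M.augment).P (some s) (some a) (some s') = M.P s a s' := rfl
    simp only [liftFin, List.map_cons, MDP.weightFrom, h]
    rw [show (List.map (fun p : A × S => ((some p.1 : Option A), (some p.2 : Option S)))
      rest) = liftFin rest from rfl, weightFrom_liftFin M rest s']

lemma pathWeight_liftFin (M : MDP S A AP) (l : FinPath S A) :
    (M.augment).pathWeight (liftFin l) = M.pathWeight l :=
  weightFrom_liftFin M l M.init

lemma mem_augment_enabled_some {M : MDP S A AP} {s : S} {a : A} :
    (some a) ∈ (M.augment).enabled (some s) ↔ a ∈ M.enabled s := by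
  simp [MDP.augment]

lemma none_mem_augment_enabled (M : MDP S A AP) (s' : Option S) :
    (none : Option A) ∈ (M.augment).enabled s' := by
  cases s' <;> simp [MDP.augment]

lemma get_liftFin (l : FinPath S A) (i : ℕ) (h : i < (liftFin l).length)
    (h' : i < l.length) :
    (liftFin l).get ⟨i, h⟩ = (some (l.get ⟨i, h'⟩).1, some (l.get ⟨i, h'⟩).2) := by
  simp [liftFin]

lemma validFin_liftFin_iff (M : MDP S A AP) (l : FinPath S A) :
    (M.augment).ValidFin (liftFin l) ↔ M.ValidFin l := by
  constructor
  · intro hv i h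
    have h2 : i < (liftFin l).length := by rwa [liftFin_length]
    have := hv i h2
    rw [get_liftFin l i h2 h, stateAtF_liftFin] at this
    exact ⟨mem_augment_enabled_some.mp this.1, this.2⟩
  · intro hv i h
    have h2 : i < l.length := by rwa [liftFin_length] at h
    rw [get_liftFin l i h h2, stateAtF_liftFin]
    exact ⟨mem_augment_enabled_some.mpr (hv i h2).1, (hv i h2).2⟩

/-- Project a finite path of the augmented MDP back to a finite path of `M`. -/
def downPath (h : FinPath (Option S) (Option A)) : FinPath S A :=
  h.filterMap fun p => p.1.bind fun a => p.2.map fun s => (a, s)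

lemma downPath_liftFin (l : FinPath S A) : downPath (liftFin l) = l := by
  induction l with
  | nil => rfl
  | cons p rest ih => simp [downPath, liftFin, List.filterMap_cons] at ih ⊢

end Aux

/-- Lemma 1: `max_{π ∈ Π} Pr(M^π ⊨ Paths_fin,φ) =
max_{π' ∈ Π'} Pr(M'^{π'} ⊨ Paths_fin,φ)`, where `Π'` is the set of policies of
the augmented MDP `M'` that enforce a visit to `s_term` (eventually take
`a_term`). -/
theorem augment_max_prob_eq
    {S A AP : Type} [Fintype S] [Fintype A] [Fintype AP]
    (M : MDP S A AP) (hM : M.IsWF)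
    (Pfin : Set (FinPath S A)) (hPfin : ∀ l ∈ Pfin, M.ValidFin l)
    (μf : ∀ π : Policy S A,
      @MeasureTheory.Measure (InfPath S A) (M.cylSigma π))
    (hμf : ∀ π : Policy S A, M.IsPolicy π → IsCylMeasure M π (μf π))
    (μf' : ∀ π' : Policy (Option S) (Option A),
      @MeasureTheory.Measure (InfPath (Option S) (Option A))
        ((M.augment).cylSigma π'))
    (hμf' : ∀ π' : Policy (Option S) (Option A),
      (M.augment).IsPolicy π' → IsCylMeasure (M.augment) π' (μf' π')) :
    (⨆ (π : Policy S A) (_ : M.IsPolicy π), μf π (M.SatFinSet π Pfin)) =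
      ⨆ (π' : Policy (Option S) (Option A))
        (_ : (M.augment).IsPolicy π' ∧ (M.augment).Terminating π'),
        μf' π' ((M.augment).SatFinSet π' (liftFin '' Pfin)) := by
  classical
  obtain ⟨hne, -⟩ := hM
  have hd : ∀ s, (hne s).choose ∈ M.enabled s := fun s => (hne s).choose_spec
  set d : S → A := fun s => (hne s).choose with hd_def
  apply le_antisymm
  · -- `max_π ≤ max_π'`
    refine iSup₂_le fun π hπ => ?_
    rw [measure_satFinSet M π Pfin (μf π) (hμf π hπ), ENNReal.tsum_eq_iSup_sum]
    refine iSup_le fun F => ?_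
    set n := F.sup List.length with hn
    set π' : Policy (Option S) (Option A) := fun h =>
      if h.length ≤ n ∧ ∃ l0 : FinPath S A, h = liftFin l0
      then some (π (downPath h)) else none with hπ'def
    have hπ'lift : ∀ l0 : FinPath S A, l0.length ≤ n →
        π' (liftFin l0) = some (π l0) := by
      intro l0 h0
      rw [hπ'def]
      simp only
      rw [if_pos ⟨by rwa [liftFin_length], l0, rfl⟩, downPath_liftFin]
    have hπ'pol : (M.augment).IsPolicy π' := by
      intro h
      by_cases hc : h.length ≤ n ∧ ∃ l0 : FinPath S A, h = liftFin l0
      · obtain ⟨hlen, l0, rfl⟩ := hc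
        rw [hπ'lift l0 (by rwa [liftFin_length] at hlen), lastState_liftFin]
        exact mem_augment_enabled_some.mpr (hπ l0)
      · have h0 : π' h = none := by rw [hπ'def]; simp only; rw [if_neg hc]
        rw [h0]
        exact none_mem_augment_enabled M _
    have hπ'term : (M.augment).Terminating π' := by
      intro w hw
      refine ⟨n + 1, ?_⟩
      rw [hw.2 (n + 1), hπ'def]
      simp only
      rw [if_neg]
      rintro ⟨hlen, -⟩
      rw [takeI_length] at hlen
      omega
    have key : ∀ l ∈ F,
        (MinSet M π Pfin).indicator M.pathWeight l ≤
          (MinSet (M.augment) π' (liftFin '' Pfin)).indicator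
            (M.augment).pathWeight (liftFin l) := by
      intro l hlF
      by_cases hl : l ∈ MinSet M π Pfin
      · have hln : l.length ≤ n := Finset.le_sup hlF
        obtain ⟨hmem, hval, hcons, hmin⟩ := id hl
        have hlift : liftFin l ∈ MinSet (M.augment) π' (liftFin '' Pfin) := by
          refine ⟨⟨l, hmem, rfl⟩, (validFin_liftFin_iff M l).mpr hval, ?_, ?_⟩
          · intro i h
            have h2 : i < l.length := by rwa [liftFin_length] at h
            rw [get_liftFin l i h h2, liftFin_take,
              hπ'lift (l.take i) (by rw [List.length_take]; omega)]
            simpa using hcons i h2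
          · rintro l'' ⟨l', hl', rfl⟩ hpre
            rw [hmin l' hl' (liftFin_prefix_iff.mp hpre)]
        rw [Set.indicator_of_mem hl, Set.indicator_of_mem hlift,
          pathWeight_liftFin]
      · rw [Set.indicator_of_notMem hl]
        exact zero_le
    calc ∑ l ∈ F, (MinSet M π Pfin).indicator M.pathWeight l
        ≤ ∑ l ∈ F, (MinSet (M.augment) π' (liftFin '' Pfin)).indicator
            (M.augment).pathWeight (liftFin l) := Finset.sum_le_sum key
      _ = ∑ l'' ∈ F.image liftFin,
            (MinSet (M.augment) π' (liftFin '' Pfin)).indicator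
              (M.augment).pathWeight l'' :=
          (Finset.sum_image fun x _ y _ h => liftFin_injective h).symm
      _ ≤ ∑' l'' : FinPath (Option S) (Option A),
            (MinSet (M.augment) π' (liftFin '' Pfin)).indicator
              (M.augment).pathWeight l'' := ENNReal.sum_le_tsum _
      _ = μf' π' ((M.augment).SatFinSet π' (liftFin '' Pfin)) :=
          (measure_satFinSet (M.augment) π' (liftFin '' Pfin) (μf' π')
            (hμf' π' hπ'pol)).symm
      _ ≤ _ := le_iSup₂ (f := fun (π'' : Policy (Option S) (Option A))
            (_ : (M.augment).IsPolicy π'' ∧ (M.augment).Terminating π'') =>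
            μf' π'' ((M.augment).SatFinSet π'' (liftFin '' Pfin))) π'
            ⟨hπ'pol, hπ'term⟩
  · -- `max_π' ≤ max_π`
    refine iSup₂_le fun π' hπ' => ?_
    obtain ⟨hpol', -⟩ := hπ'
    set π : Policy S A := fun l => (π' (liftFin l)).elim (d (M.lastState l)) id
      with hπdef
    have hπpol : M.IsPolicy π := by
      intro l
      show (π' (liftFin l)).elim (d (M.lastState l)) id ∈ M.enabled (M.lastState l)
      cases hopt : π' (liftFin l) with
      | none => exact hd _
      | some a =>
        have h1 := hpol' (liftFin l)
        rw [hopt, lastState_liftFin] at h1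
        exact mem_augment_enabled_some.mp h1
    have hsupp : Function.support
        ((MinSet (M.augment) π' (liftFin '' Pfin)).indicator
          (M.augment).pathWeight) ⊆ Set.range (liftFin (S := S) (A := A)) := by
      intro l'' hsup
      have hmem : l'' ∈ MinSet (M.augment) π' (liftFin '' Pfin) := by
        by_contra h
        exact hsup (Set.indicator_of_notMem h _)
      obtain ⟨⟨l, -, rfl⟩, -⟩ := hmem
      exact ⟨l, rfl⟩
    have hpoint : ∀ l : FinPath S A,
        (MinSet (M.augment) π' (liftFin '' Pfin)).indicator
            (M.augment).pathWeight (liftFin l) ≤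
          (MinSet M π Pfin).indicator M.pathWeight l := by
      intro l
      by_cases h : liftFin l ∈ MinSet (M.augment) π' (liftFin '' Pfin)
      · obtain ⟨⟨l1, hl1, heq⟩, hval, hcons, hmin⟩ := id h
        have hlP : l ∈ Pfin := by rwa [liftFin_injective heq] at hl1
        have hlmem : l ∈ MinSet M π Pfin := by
          refine ⟨hlP, (validFin_liftFin_iff M l).mp hval, ?_, ?_⟩
          · intro i hi
            have h2 : i < (liftFin l).length := by rwa [liftFin_length]
            have h3 := hcons i h2
            rw [get_liftFin l i h2 hi, liftFin_take] at h3
            show (l.get ⟨i, hi⟩).1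
              = (π' (liftFin (l.take i))).elim (d (M.lastState (l.take i))) id
            rw [← h3]
            rfl
          · intro l' hl' hpre
            exact liftFin_injective
              (hmin (liftFin l') ⟨l', hl', rfl⟩ (liftFin_prefix_iff.mpr hpre))
        rw [Set.indicator_of_mem h, Set.indicator_of_mem hlmem,
          pathWeight_liftFin]
      · rw [Set.indicator_of_notMem h]
        exact zero_le
    calc μf' π' ((M.augment).SatFinSet π' (liftFin '' Pfin))
        = ∑' l'' : FinPath (Option S) (Option A),
            (MinSet (M.augment) π' (liftFin '' Pfin)).indicator
              (M.augment).pathWeight l'' :=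
          measure_satFinSet (M.augment) π' (liftFin '' Pfin) (μf' π')
            (hμf' π' hpol')
      _ = ∑' l : FinPath S A,
            (MinSet (M.augment) π' (liftFin '' Pfin)).indicator
              (M.augment).pathWeight (liftFin l) :=
          (liftFin_injective.tsum_eq hsupp).symm
      _ ≤ ∑' l : FinPath S A, (MinSet M π Pfin).indicator M.pathWeight l :=
          ENNReal.tsum_le_tsum hpoint
      _ = μf π (M.SatFinSet π Pfin) :=
          (measure_satFinSet M π Pfin (μf π) (hμf π hπpol)).symm
      _ ≤ _ := le_iSup₂ (f := fun (π₀ : Policy S A) (_ : M.IsPolicy π₀) =>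
            μf π₀ (M.SatFinSet π₀ Pfin)) π hπpol

end LTLfMDP
end

section
/- Let M be a labeled MDP, M' its augmented MDP, and φ an LTLf formula over AP. An infinite path w' = s_0⟨a_0,s_1⟩⟨a_1,s_2⟩… of M' has labeling L'(s_0)L'(s_1)… satisfying the LTL formula g(φ) if and only if there exists n ≥ 1 such that s_i ≠ s_term for all i < n, s_i = s_term for all i ≥ n, and the finite trace L(s_0)…L(s_{n-1}) satisfies φ under LTLf semantics (equivalently, the finite path s_0…s_{n-1} of M has labeling in L(φ)). -/
open scoped ENNReal

namespace LTLfMDP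

variable {S A AP : Type}

/-- Syntax of LTL / LTLf formulas over atomic propositions `α`. -/
inductive LTL (α : Type) : Type
  | tru : LTL α
  | atom : α → LTL α
  | neg : LTL α → LTL α
  | conj : LTL α → LTL α → LTL α
  | next : LTL α → LTL α
  | untl : LTL α → LTL α → LTL α

variable {α : Type}

/-- Infinite-trace (LTL) satisfaction `σ, i ⊨ φ`. -/
def LTL.SatI (σ : ℕ → Set α) : ℕ → LTL α → Prop
  | _, .tru => True
  | i, .atom p => p ∈ σ i
  | i, .neg φ => ¬ LTL.SatI σ i φ
  | i, .conj φ ψ => LTL.SatI σ i φ ∧ LTL.SatI σ i ψ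
  | i, .next φ => LTL.SatI σ (i + 1) φ
  | i, .untl φ ψ =>
      ∃ j : ℕ, i ≤ j ∧ LTL.SatI σ j ψ ∧ ∀ k : ℕ, i ≤ k → k < j → LTL.SatI σ k φ

/-- Infinite-trace (LTL) satisfaction `σ ⊨ φ`. -/
def LTL.Sat (σ : ℕ → Set α) (φ : LTL α) : Prop := LTL.SatI σ 0 φ

/-- `G φ` abbreviates `¬(⊤ U ¬φ)`. -/
def LTL.G (φ : LTL α) : LTL α := .neg (.untl .tru (.neg φ))

/-- Finite-trace (LTLf) satisfaction `ρ, i ⊨ φ` (positions outside the trace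
carry the empty letter, which is never consulted from a position inside a
nonempty trace). -/
def LTL.SatFI (ρ : List (Set α)) : ℕ → LTL α → Prop
  | _, .tru => True
  | i, .atom p => p ∈ ρ.getD i ∅
  | i, .neg φ => ¬ LTL.SatFI ρ i φ
  | i, .conj φ ψ => LTL.SatFI ρ i φ ∧ LTL.SatFI ρ i ψ
  | i, .next φ => i + 1 < ρ.length ∧ LTL.SatFI ρ (i + 1) φ
  | i, .untl φ ψ =>
      ∃ j : ℕ, i ≤ j ∧ j < ρ.length ∧ LTL.SatFI ρ j ψ ∧
        ∀ k : ℕ, i ≤ k → k < j → LTL.SatFI ρ k φ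

/-- Finite-trace (LTLf) satisfaction `ρ ⊨ φ`. -/
def LTL.SatF (ρ : List (Set α)) (φ : LTL α) : Prop := LTL.SatFI ρ 0 φ

/-- The translation `t` from LTLf formulas over `α` to LTL formulas over
`Option α`, where the fresh proposition `alive` is `none`. -/
def LTL.trans : LTL α → LTL (Option α)
  | .tru => .tru
  | .atom p => .conj (.atom (some p)) (.atom none)
  | .neg φ => .neg φ.trans
  | .conj φ ψ => .conj φ.trans ψ.trans
  | .next φ => .next (.conj (.atom none) φ.trans)
  | .untl φ ψ => .untl φ.trans (.conj (.atom none) ψ.trans)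

/-- `g(φ) = t(φ) ∧ (alive U (G ¬alive))`. -/
def LTL.gtrans (φ : LTL α) : LTL (Option α) :=
  .conj φ.trans (.untl (.atom none) (LTL.G (.neg (.atom none))))

/-- The lift of a finite trace over `2^AP` to an infinite trace over
`2^(AP ∪ {alive})`: the `i`-th letter is `ρ_i ∪ {alive}` for `i < |ρ|`
and `∅` afterwards. -/
def liftTrace (ρ : List (Set α)) : ℕ → Set (Option α) := fun i =>
  if i < ρ.length then insert none (Option.some '' ρ.getD i ∅) else ∅

lemma none_mem_liftTrace {α : Type} (ρ : List (Set α)) (i : ℕ) :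
    none ∈ liftTrace ρ i ↔ i < ρ.length := by
  unfold liftTrace
  split <;> simp_all

lemma some_mem_liftTrace {α : Type} (ρ : List (Set α)) (i : ℕ) (p : α) :
    some p ∈ liftTrace ρ i ↔ p ∈ ρ.getD i ∅ := by
  unfold liftTrace
  split
  next h => simp
  next h =>
    push_neg at h
    rw [List.getD_eq_default ρ ∅ h]
    simp

lemma trans_sat_iff {α : Type} (ρ : List (Set α)) (φ : LTL α) :
    ∀ i : ℕ, LTL.SatI (liftTrace ρ) i φ.trans ↔ LTL.SatFI ρ i φ := by
  induction φ with
  | tru => intro i; simp [LTL.trans, LTL.SatI, LTL.SatFI]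
  | atom p =>
      intro i
      show some p ∈ liftTrace ρ i ∧ none ∈ liftTrace ρ i ↔ _
      rw [some_mem_liftTrace, none_mem_liftTrace]
      unfold LTL.SatFI
      constructor
      · rintro ⟨h, _⟩; exact h
      · intro h
        refine ⟨h, ?_⟩
        by_contra hlen
        push_neg at hlen
        rw [List.getD_eq_default ρ ∅ (by omega)] at h
        exact h
  | neg φ ih => intro i; show ¬ _ ↔ ¬ _; rw [ih]
  | conj φ ψ ihφ ihψ => intro i; show _ ∧ _ ↔ _ ∧ _; rw [ihφ, ihψ]
  | next φ ih =>
      intro i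
      show (none ∈ liftTrace ρ (i+1) ∧ _) ↔ _
      rw [none_mem_liftTrace, ih]
      rfl
  | untl φ ψ ihφ ihψ =>
      intro i
      show (∃ j, i ≤ j ∧ (none ∈ liftTrace ρ j ∧ _) ∧ _) ↔ _
      unfold LTL.SatFI
      constructor
      · rintro ⟨j, hij, ⟨hj, hψ⟩, hk⟩
        exact ⟨j, hij, (none_mem_liftTrace ρ j).1 hj, (ihψ j).1 hψ,
          fun k h1 h2 => (ihφ k).1 (hk k h1 h2)⟩
      · rintro ⟨j, hij, hjl, hψ, hk⟩
        exact ⟨j, hij, ⟨(none_mem_liftTrace ρ j).2 hjl, (ihψ j).2 hψ⟩,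
          fun k h1 h2 => (ihφ k).2 (hk k h1 h2)⟩

/-- an infinite path `w` of the augmented MDP `M'` has labeling
`L'(s_0)L'(s_1)…` satisfying `g(φ)` iff there is `n ≥ 1` such that
`s_i ≠ s_term` for `i < n`, `s_i = s_term` for `i ≥ n`, and the finite trace
`L(s_0)…L(s_{n-1})` satisfies `φ` under LTLf semantics. -/
theorem augment_path_label_sat_gtrans_iff
    {S A AP : Type} [Fintype S] [Fintype A] [Fintype AP]
    (M : MDP S A AP) (hM : M.IsWF)
    (φ : LTL AP) (w : InfPath (Option S) (Option A))
    (hw : (M.augment).ValidInf w) :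
    LTL.Sat (fun i => (M.augment).label ((M.augment).stateAtI w i))
        (LTL.gtrans φ) ↔
      ∃ n : ℕ, 1 ≤ n ∧
        (∀ i < n, (M.augment).stateAtI w i ≠ none) ∧
        (∀ i : ℕ, n ≤ i → (M.augment).stateAtI w i = none) ∧
        LTL.SatF ((List.range n).map fun i =>
          M.label (((M.augment).stateAtI w i).getD M.init)) φ := by
  set st : ℕ → Option S := (M.augment).stateAtI w with hst
  set σ : ℕ → Set (Option AP) := fun i => (M.augment).label (st i) with hσ
  -- once terminated, always terminated
  have step : ∀ i, st i = none → st (i + 1) = none := by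
    intro i hi
    obtain ⟨hen, hpos⟩ := hw i
    rw [show (M.augment).stateAtI w i = st i from rfl, hi] at hen hpos
    have ha : (w i).1 = none := by simpa [MDP.augment] using hen
    rw [ha] at hpos
    by_contra hne
    obtain ⟨s, hs⟩ := Option.ne_none_iff_exists'.mp
      (show st (i + 1) ≠ none from hne)
    rw [show (M.augment).stateAtI w (i + 1) = st (i + 1) from rfl, hs] at hpos
    simp [MDP.augment] at hpos
  have mono : ∀ n, st n = none → ∀ m, n ≤ m → st m = none := by
    intro n hn m hm
    induction m with
    | zero => exact (Nat.le_zero.mp hm) ▸ hn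
    | succ k ih =>
        rcases Nat.lt_or_ge n (k + 1) with h | h
        · exact step k (ih (by omega))
        · exact (by omega : n = k + 1) ▸ hn
  have hzero : st 0 = some M.init := rfl
  have halive : ∀ i, none ∈ σ i ↔ st i ≠ none := by
    intro i
    cases h : st i with
    | none => simp [hσ, h, MDP.augment]
    | some s => simp [hσ, h, MDP.augment]
  -- characterize the second conjunct of gtrans
  have hsecond : LTL.SatI σ 0 (.untl (.atom none) (LTL.G (.neg (.atom none)))) ↔
      ∃ n : ℕ, 1 ≤ n ∧ (∀ i < n, st i ≠ none) ∧ (∀ i, n ≤ i → st i = none) := by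
    constructor
    · rintro ⟨j, -, hG, hpre⟩
      have hGj : ∀ m, j ≤ m → st m = none := by
        intro m hm
        by_contra hne
        exact hG ⟨m, hm, fun h => h ((halive m).mpr hne), fun _ _ _ => trivial⟩
      have hj1 : 1 ≤ j := by
        by_contra h
        have : st 0 = none := hGj 0 (by omega)
        rw [hzero] at this; exact Option.some_ne_none _ this
      exact ⟨j, hj1, fun i hi => (halive i).mp (hpre i (Nat.zero_le i) hi), hGj⟩
    · rintro ⟨n, hn1, hlt, hge⟩
      refine ⟨n, Nat.zero_le n, ?_, fun k _ hk => (halive k).mpr (hlt k hk)⟩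
      rintro ⟨m, hm, hmem, -⟩
      exact hmem fun h => ((halive m).mp h) (hge m hm)
  -- under the termination structure, σ is the lift of the finite trace
  have hσeq : ∀ n : ℕ, (∀ i < n, st i ≠ none) → (∀ i, n ≤ i → st i = none) →
      σ = liftTrace ((List.range n).map fun i => M.label ((st i).getD M.init)) := by
    intro n h1 h2
    funext i
    have hlen : ((List.range n).map fun i => M.label ((st i).getD M.init)).length = n := by
      simp
    by_cases hi : i < n
    · obtain ⟨s, hs⟩ := Option.ne_none_iff_exists'.mp (h1 i hi)
      have hget : ((List.range n).map fun i => M.label ((st i).getD M.init)).getD i ∅ =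
          M.label s := by
        rw [List.getD_eq_getElem _ _ (by omega)]
        simp [hs]
      simp only [liftTrace, hlen, hi, if_true, hget, hσ, hs, MDP.augment]
    · push_neg at hi
      have : st i = none := h2 i hi
      simp only [liftTrace, hlen, hσ, this, MDP.augment]
      rw [if_neg (by omega)]
  constructor
  · rintro ⟨ht, hu⟩
    obtain ⟨n, hn1, hlt, hge⟩ := hsecond.mp hu
    refine ⟨n, hn1, hlt, hge, ?_⟩
    rw [hσeq n hlt hge] at ht
    exact (trans_sat_iff _ φ 0).mp ht
  · rintro ⟨n, hn1, hlt, hge, hsat⟩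
    refine ⟨?_, hsecond.mpr ⟨n, hn1, hlt, hge⟩⟩
    rw [show LTL.SatI σ 0 φ.trans = LTL.SatI σ 0 φ.trans from rfl, hσeq n hlt hge]
    exact (trans_sat_iff _ φ 0).mpr hsat

end LTLfMDP
end
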